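/- Let F be a Minkowski norm on a finite-dimensional real vector space V and let W be a proper linear subspace of V. Then there exists y ∈ V∖W with g_y(w,y) = 0 for all w ∈ W. -/

import Mathlib

noncomputable section

/-- The fundamental tensor `g_y(u,v) = (1/2)·∂²/∂s∂t|_{s=t=0} F(y+su+tv)²`. -/
def gTensor {V : Type*} [NormedAddCommGroup V] [NormedSpace ℝ V]
    (F : V → ℝ) (y u v : V) : ℝ :=
  (1 / 2) * deriv (fun s : ℝ => deriv (fun t : ℝ => (F (y + s • u + t • v)) ^ 2) 0) 0

/-- The Cartan tensor `C_y(u,v,w) = (1/2)·d/dt|_{t=0} g_{y+tw}(u,v)`. -/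
def cartanTensor {V : Type*} [NormedAddCommGroup V] [NormedSpace ℝ V]
    (F : V → ℝ) (y u v w : V) : ℝ :=
  (1 / 2) * deriv (fun t : ℝ => gTensor F (y + t • w) u v) 0

/-- `F` is a Minkowski norm: positive and smooth away from `0`, positively
homogeneous of degree one, with positive-definite symmetric bilinear fundamental tensor. -/
structure IsMinkowskiNorm {V : Type*} [NormedAddCommGroup V] [NormedSpace ℝ V]
    (F : V → ℝ) : Prop where
  pos : ∀ y : V, y ≠ 0 → 0 < F y
  smooth : ContDiffOn ℝ (⊤ : ℕ∞) F {(0 : V)}ᶜ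
  homog : ∀ c : ℝ, 0 < c → ∀ y : V, F (c • y) = c * F y
  g_symm : ∀ y : V, y ≠ 0 → ∀ u v : V, gTensor F y u v = gTensor F y v u
  g_add_left : ∀ y : V, y ≠ 0 → ∀ u u' v : V,
    gTensor F y (u + u') v = gTensor F y u v + gTensor F y u' v
  g_smul_left : ∀ y : V, y ≠ 0 → ∀ (c : ℝ) (u v : V),
    gTensor F y (c • u) v = c * gTensor F y u v
  g_posdef : ∀ y : V, y ≠ 0 → ∀ u : V, u ≠ 0 → 0 < gTensor F y u u

/-- A Lie algebra structure on the real vector space `V`, given as a bilinear map. -/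
structure IsLieBracket {V : Type*} [AddCommGroup V] [Module ℝ V]
    (L : V →ₗ[ℝ] V →ₗ[ℝ] V) : Prop where
  alternate : ∀ x : V, L x x = 0
  jacobi : ∀ x y z : V, L x (L y z) = L (L x y) z + L y (L x z)

/-- The cyclic condition for a Minkowski norm on a Lie algebra. -/
def IsCyclicNorm {V : Type*} [NormedAddCommGroup V] [NormedSpace ℝ V]
    (L : V →ₗ[ℝ] V →ₗ[ℝ] V) (F : V → ℝ) : Prop :=
  ∀ y : V, y ≠ 0 → ∀ x z : V,
    gTensor F y (L x y) z + gTensor F y (L y z) x + gTensor F y (L z x) y = 0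

/-- The Riemann curvature `R_y(u) = D_η N(y,u) − N(y,N(y,u)) + N(y,[y,u]) − [y,N(y,u)]`. -/
def RiemannCurv {V : Type*} [NormedAddCommGroup V] [NormedSpace ℝ V]
    (L : V →ₗ[ℝ] V →ₗ[ℝ] V) (η : V → V) (N : V → V → V) (y u : V) : V :=
  fderiv ℝ (fun z => N z u) y (η y) - N y (N y u) + N y (L y u) - L y (N y u)

/-- Projection onto `m` along `h` in the decomposition `g = h ⊕ m`. -/
def projTo {V : Type*} [AddCommGroup V] [Module ℝ V] (h m : Submodule ℝ V)
    (hcompl : IsCompl h m) : V →ₗ[ℝ] m :=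
  m.linearProjOfIsCompl h hcompl.symm

/-- The inner product making the basis `e` orthonormal. -/
def basisInner {V : Type*} [AddCommGroup V] [Module ℝ V] {ι : Type*} [Fintype ι]
    (e : Module.Basis ι ℝ V) (x y : V) : ℝ :=
  ∑ k, e.repr x k * e.repr y k


section AuxMinkowski

variable {V : Type*} [NormedAddCommGroup V] [NormedSpace ℝ V]

/-- φ(s) = F(y+s•w)² is smooth on the open set where y+s•w ≠ 0. -/
lemma phi_contDiffOn (F : V → ℝ) (hF : IsMinkowskiNorm F) (y w : V) :
    ContDiffOn ℝ (⊤ : ℕ∞) (fun s : ℝ => (F (y + s • w)) ^ 2)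
      {s : ℝ | y + s • w ≠ 0} := by
  have hline : ContDiff ℝ (⊤ : ℕ∞) (fun s : ℝ => y + s • w) :=
    contDiff_const.add (contDiff_id.smul contDiff_const)
  have h1 : ContDiffOn ℝ (⊤ : ℕ∞) (fun s : ℝ => F (y + s • w))
      {s : ℝ | y + s • w ≠ 0} := by
    apply hF.smooth.comp hline.contDiffOn
    intro s hs
    exact hs
  exact h1.pow 2

lemma isOpen_phi_set (y w : V) : IsOpen {s : ℝ | y + s • w ≠ 0} := by
  have : Continuous (fun s : ℝ => y + s • w) :=
    continuous_const.add (continuous_id.smul continuous_const)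
  exact isOpen_compl_singleton.preimage this

/-- Key: g_y(w,y) = (1/2) φ'(0). -/
lemma gTensor_self_right (F : V → ℝ) (hF : IsMinkowskiNorm F) {y : V} (hy : y ≠ 0) (w : V) :
    gTensor F y w y = (1 / 2) * deriv (fun s : ℝ => (F (y + s • w)) ^ 2) 0 := by
  set φ : ℝ → ℝ := fun s => (F (y + s • w)) ^ 2 with hφ
  set U : Set ℝ := {s : ℝ | y + s • w ≠ 0} with hU
  have hUopen : IsOpen U := isOpen_phi_set y w
  have h0U : (0 : ℝ) ∈ U := by simp [hU, hy]
  have hφC : ContDiffOn ℝ (⊤ : ℕ∞) φ U := phi_contDiffOn F hF y w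
  have hφ'C : ContDiffOn ℝ (⊤ : ℕ∞) (deriv φ) U :=
    hφC.deriv_of_isOpen hUopen (by exact_mod_cast le_top)
  -- differentiability facts
  have hφdiff : ∀ s ∈ U, DifferentiableAt ℝ φ s := fun s hs =>
    (hφC.contDiffAt (hUopen.mem_nhds hs)).differentiableAt (by simp)
  have hφ'diff : DifferentiableAt ℝ (deriv φ) 0 :=
    (hφ'C.contDiffAt (hUopen.mem_nhds h0U)).differentiableAt (by simp)
  -- the inner derivative function
  set g : ℝ → ℝ := fun s => deriv (fun t : ℝ => (F (y + s • w + t • y)) ^ 2) 0 with hg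
  -- for s ∈ U, g s = 2 * φ s - s * deriv φ s
  have hkey : ∀ s ∈ U, g s = 2 * φ s - s * deriv φ s := by
    intro s hs
    have heq : (fun t : ℝ => (F (y + s • w + t • y)) ^ 2)
        =ᶠ[nhds (0:ℝ)] (fun t : ℝ => (1 + t) ^ 2 * φ (s / (1 + t))) := by
      filter_upwards [eventually_gt_nhds (show (-1:ℝ) < 0 by norm_num)] with t ht
      have h1t : (0:ℝ) < 1 + t := by linarith
      have : y + s • w + t • y = (1 + t) • (y + (s / (1 + t)) • w) := by
        rw [smul_add, smul_smul]
        rw [mul_div_cancel₀ _ (ne_of_gt h1t)]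
        module
      rw [this, hF.homog _ h1t, mul_pow, hφ]
    have hds : HasDerivAt (fun t : ℝ => (1 + t) ^ 2 * φ (s / (1 + t)))
        (2 * φ s - s * deriv φ s) 0 := by
      have h1 : HasDerivAt (fun t : ℝ => (1 + t) ^ 2) 2 0 := by
        have := ((hasDerivAt_id (0:ℝ)).const_add 1).fun_pow 2
        simpa using this
      have h2 : HasDerivAt (fun t : ℝ => s / (1 + t)) (-s) 0 := by
        have h3 : HasDerivAt (fun t : ℝ => 1 + t) 1 0 := (hasDerivAt_id (0:ℝ)).const_add 1
        have h4 : HasDerivAt (fun t : ℝ => s / (1 + t)) (-(s * 1) / (1 + 0)^2) 0 := by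
          simpa using (hasDerivAt_const (0:ℝ) s).fun_div h3 (by norm_num)
        simpa using h4
      have hφ0 : HasDerivAt φ (deriv φ s) (s / (1 + (0:ℝ))) := by
        rw [add_zero, div_one]; exact (hφdiff s hs).hasDerivAt
      have h5 : HasDerivAt (fun t : ℝ => φ (s / (1 + t))) (deriv φ s * (-s)) 0 := by
        simpa [Function.comp_def] using hφ0.comp 0 h2
      have h6 := h1.fun_mul h5
      exact h6.congr_deriv (by ring)
    rw [hg]
    simp only
    rw [heq.deriv_eq, hds.deriv]
  -- near 0, g agrees with G
  have hev : g =ᶠ[nhds (0:ℝ)] (fun s => 2 * φ s - s * deriv φ s) := by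
    filter_upwards [hUopen.mem_nhds h0U] with s hs using hkey s hs
  have hGd : HasDerivAt (fun s => 2 * φ s - s * deriv φ s) (deriv φ 0) 0 := by
    have h1 : HasDerivAt (fun s => 2 * φ s) (2 * deriv φ 0) 0 :=
      ((hφdiff 0 h0U).hasDerivAt).const_mul 2
    have h2 : HasDerivAt (fun s : ℝ => s * deriv φ s)
        (1 * deriv φ 0 + 0 * deriv (deriv φ) 0) 0 :=
      (hasDerivAt_id 0).fun_mul hφ'diff.hasDerivAt
    have h3 := h1.fun_sub h2
    exact h3.congr_deriv (by ring)
  have : deriv g 0 = deriv φ 0 := by rw [hev.deriv_eq, hGd.deriv]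
  rw [gTensor]
  simp only [hg] at this
  rw [show (fun s : ℝ => deriv (fun t : ℝ => (F (y + s • w + t • y)) ^ 2) 0) = g from rfl, this]

end AuxMinkowski

/-- For a Minkowski norm `F` on `V` and a proper subspace `W ⊊ V`,
there is `y ∉ W` with `g_y(w,y) = 0` for all `w ∈ W`. -/
theorem exists_gTensor_orthogonal_of_proper_subspace
    {V : Type*} [NormedAddCommGroup V] [NormedSpace ℝ V] [FiniteDimensional ℝ V]
    (F : V → ℝ) (hF : IsMinkowskiNorm F)
    (W : Submodule ℝ V) (hW : W ≠ ⊤) :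
    ∃ y : V, y ∉ W ∧ ∀ w ∈ W, gTensor F y w y = 0 := by
  obtain ⟨v, hv⟩ : ∃ v : V, v ∉ W := by
    by_contra h
    push_neg at h
    exact hW (Submodule.eq_top_iff'.2 h)
  have hv0 : v ≠ 0 := fun h => hv (h ▸ W.zero_mem)
  have : Nontrivial V := ⟨v, 0, hv0⟩
  have hFc : ContinuousOn F {(0:V)}ᶜ := hF.smooth.continuousOn
  -- coercivity
  obtain ⟨c, hc, hcoer⟩ : ∃ c : ℝ, 0 < c ∧ ∀ x : V, x ≠ 0 → c * ‖x‖ ≤ F x := by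
    obtain ⟨x1, hx1⟩ := exists_norm_eq V (zero_le_one (α := ℝ))
    have hsne : (Metric.sphere (0:V) 1).Nonempty := ⟨x1, by simpa using hx1⟩
    have hsub : Metric.sphere (0:V) 1 ⊆ {(0:V)}ᶜ := by
      intro x hx
      simp only [mem_sphere_iff_norm, sub_zero] at hx
      simp only [Set.mem_compl_iff, Set.mem_singleton_iff]
      intro h
      rw [h] at hx; simp at hx
    obtain ⟨z, hz, hzmin⟩ :=
      (isCompact_sphere (0:V) 1).exists_isMinOn hsne (hFc.mono hsub)
    have hz0 : z ≠ 0 := hsub hz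
    refine ⟨F z, hF.pos z hz0, ?_⟩
    intro x hx
    have hn : (0:ℝ) < ‖x‖ := norm_pos_iff.2 hx
    have hxs : ‖x‖⁻¹ • x ∈ Metric.sphere (0:V) 1 := by
      simp [norm_smul, inv_mul_cancel₀ (ne_of_gt hn)]
    have h1 : F x = ‖x‖ * F (‖x‖⁻¹ • x) := by
      rw [← hF.homog ‖x‖ hn, smul_smul, mul_inv_cancel₀ (ne_of_gt hn), one_smul]
    rw [h1, mul_comm (F z) ‖x‖]
    exact mul_le_mul_of_nonneg_left (hzmin hxs) (le_of_lt hn)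
  -- the closed affine set S = v + W
  set S : Set V := (fun x => x - v) ⁻¹' (W : Set V) with hSdef
  have hScl : IsClosed S :=
    (Submodule.closed_of_finiteDimensional W).preimage (continuous_id.sub continuous_const)
  have hvS : v ∈ S := by simp [hSdef, W.zero_mem]
  have hS0 : (0:V) ∉ S := by
    intro h
    simp only [hSdef, Set.mem_preimage, zero_sub, SetLike.mem_coe] at h
    exact hv (by simpa using W.neg_mem h)
  have hSsub : S ⊆ {(0:V)}ᶜ := fun x hx h => hS0 (h ▸ hx)
  have hFcS : ContinuousOn (fun x => (F x) ^ 2) S := (hFc.mono hSsub).pow 2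
  have hcoc : ∀ᶠ x in Filter.cocompact V ⊓ Filter.principal S,
      (F v) ^ 2 ≤ (F x) ^ 2 := by
    rw [Filter.eventually_inf_principal]
    have h1 : ∀ᶠ x : V in Filter.cocompact V, F v / c + 1 ≤ ‖x‖ :=
      tendsto_norm_cocompact_atTop.eventually (Filter.eventually_ge_atTop _)
    filter_upwards [h1] with x hx hxS
    have hx0 : x ≠ 0 := hSsub hxS
    have hFv : 0 < F v := hF.pos v hv0
    have : F v ≤ F x := by
      have h2 := hcoer x hx0
      have h3 : c * (F v / c + 1) ≤ c * ‖x‖ := by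
        exact mul_le_mul_of_nonneg_left hx (le_of_lt hc)
      have h4 : c * (F v / c + 1) = F v + c := by
        field_simp
      nlinarith
    exact pow_le_pow_left₀ (le_of_lt hFv) this 2
  obtain ⟨y, hyS, hymin⟩ := hFcS.exists_isMinOn' hScl hvS hcoc
  have hy0 : y ≠ 0 := hSsub hyS
  have hyW : y ∉ W := by
    intro hmem
    have h1 : y - v ∈ W := hyS
    exact hv (by simpa using W.sub_mem hmem h1)
  refine ⟨y, hyW, fun w hw => ?_⟩
  have hmin : IsLocalMin (fun s : ℝ => (F (y + s • w)) ^ 2) 0 := by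
    apply Filter.Eventually.of_forall
    intro s
    have hsS : y + s • w ∈ S := by
      simp only [hSdef, Set.mem_preimage, SetLike.mem_coe]
      have : y + s • w - v = (y - v) + s • w := by abel
      rw [this]
      exact W.add_mem hyS (W.smul_mem s hw)
    have := hymin hsS
    simpa using this
  rw [gTensor_self_right F hF hy0 w, hmin.deriv_eq_zero, mul_zero]


end
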